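/- Let π be a random probability sequence, T a size-biased index for π, and suppose that π_T has the Beta(1−d, α+d) distribution, where 0 ≤ d < 1 and α > −d. Then the expected entropy satisfies E[ −Σᵢ πᵢ log πᵢ ] = ψ₀(α+1) − ψ₀(1−d). -/

import Mathlib

open MeasureTheory ENNReal

/-- The digamma function `ψ₀(x) = d/dx log Γ(x)`. -/
noncomputable def digamma (x : ℝ) : ℝ := deriv (fun y => Real.log (Real.Gamma y)) x

/-- The `Beta(a,b)` distribution on `(0,1)`, with density `x^{a−1}(1−x)^{b−1}/B(a,b)`. -/
noncomputable def betaMeasure (a b : ℝ) : Measure ℝ :=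
  (volume.restrict (Set.Ioo (0 : ℝ) 1)).withDensity fun x =>
    ENNReal.ofReal (x ^ (a - 1) * (1 - x) ^ (b - 1) /
      (Real.Gamma a * Real.Gamma b / Real.Gamma (a + b)))


open MeasureTheory Set Real Filter

-- real beta integrability on Ioo
lemma beta_integrableOn {a b : ℝ} (ha : 0 < a) (hb : 0 < b) :
    IntegrableOn (fun x : ℝ => x ^ (a - 1) * (1 - x) ^ (b - 1)) (Ioo 0 1) := by
  have h := Complex.betaIntegral_convergent (u := (a:ℂ)) (v := (b:ℂ)) (by simpa) (by simpa)
  have h2 := h.norm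
  rw [intervalIntegrable_iff_integrableOn_Ioo_of_le (by norm_num)] at h2
  refine h2.congr_fun ?_ measurableSet_Ioo
  intro x hx
  have hx0 : (0:ℝ) < x := hx.1
  have hx1 : (0:ℝ) < 1 - x := by linarith [hx.2]
  simp only [norm_mul]
  rw [show (1 - (x:ℂ)) = ((1 - x : ℝ) : ℂ) by push_cast; ring]
  rw [show ((a:ℂ) - 1) = ((a - 1 : ℝ) : ℂ) by push_cast; ring,
    show ((b:ℂ) - 1) = ((b - 1 : ℝ) : ℂ) by push_cast; ring]
  rw [Complex.norm_cpow_eq_rpow_re_of_pos hx0, Complex.norm_cpow_eq_rpow_re_of_pos hx1]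
  simp

-- real beta identity
lemma real_beta_eq {a b : ℝ} (ha : 0 < a) (hb : 0 < b) :
    ∫ x in Ioo (0:ℝ) 1, x ^ (a - 1) * (1 - x) ^ (b - 1) =
      Real.Gamma a * Real.Gamma b / Real.Gamma (a + b) := by
  have h := Complex.Gamma_mul_Gamma_eq_betaIntegral (s := (a:ℂ)) (t := (b:ℂ)) (by simpa) (by simpa)
  have hβ : Complex.betaIntegral a b = ((∫ x in Ioo (0:ℝ) 1, x ^ (a - 1) * (1 - x) ^ (b - 1) : ℝ) : ℂ) := by
    rw [Complex.betaIntegral]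
    rw [show (∫ x in Ioo (0:ℝ) 1, x ^ (a - 1) * (1 - x) ^ (b - 1)) =
        ∫ x in (0:ℝ)..1, x ^ (a - 1) * (1 - x) ^ (b - 1) by
      rw [intervalIntegral.integral_of_le (by norm_num : (0:ℝ) ≤ 1)]
      exact setIntegral_congr_set Ioo_ae_eq_Ioc]
    rw [← intervalIntegral.integral_ofReal]
    refine intervalIntegral.integral_congr fun x hx => ?_
    rw [uIcc_of_le (by norm_num : (0:ℝ) ≤ 1)] at hx
    by_cases hx0 : x = 0
    · subst hx0
      simp only [Complex.ofReal_mul]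
      rw [Complex.ofReal_cpow le_rfl, Complex.ofReal_cpow (by norm_num)]
      push_cast
      ring_nf
    · have hx0' : 0 < x := lt_of_le_of_ne hx.1 (Ne.symm hx0)
      have hx1 : 0 ≤ 1 - x := by linarith [hx.2]
      simp only [Complex.ofReal_mul]
      rw [Complex.ofReal_cpow hx0'.le, Complex.ofReal_cpow hx1]
      push_cast
      ring_nf
  rw [hβ] at h
  have hG : Complex.Gamma ((a:ℂ) + b) = ((Real.Gamma (a+b) : ℝ) : ℂ) := by
    rw [← Complex.ofReal_add, Complex.Gamma_ofReal]
  rw [Complex.Gamma_ofReal, Complex.Gamma_ofReal, hG, ← Complex.ofReal_mul, ← Complex.ofReal_mul] at h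
  have := Complex.ofReal_inj.mp h
  have hGab : Real.Gamma (a + b) ≠ 0 := (Real.Gamma_pos_of_pos (by linarith)).ne'
  field_simp
  linarith [this]

lemma neg_log_le {x s : ℝ} (hx : 0 < x) (hs : 0 < s) : -Real.log x ≤ x ^ (-s) / s := by
  have h1 : Real.log (x ^ (-s)) ≤ x ^ (-s) := Real.log_le_sub_one_of_pos (Real.rpow_pos_of_pos hx _) |>.trans (by linarith)
  rw [Real.log_rpow hx] at h1
  rw [le_div_iff₀ hs]
  nlinarith

lemma log_beta_integrableOn {c b : ℝ} (hc : 0 < c) (hb : 0 < b) :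
    IntegrableOn (fun x : ℝ => |Real.log x| * (x ^ (c - 1) * (1 - x) ^ (b - 1))) (Ioo 0 1) := by
  have hI : IntegrableOn (fun x : ℝ => (2 / c) * (x ^ (c / 2 - 1) * (1 - x) ^ (b - 1))) (Ioo 0 1) :=
    (beta_integrableOn (by linarith) hb).const_mul _
  refine Integrable.mono' hI ?_ ?_
  · refine AEStronglyMeasurable.mul ?_ (AEStronglyMeasurable.mul ?_ ?_)
    · exact (Real.measurable_log.abs).aestronglyMeasurable
    · exact (measurable_id.pow measurable_const).aestronglyMeasurable
    · exact ((measurable_const.sub measurable_id).pow measurable_const).aestronglyMeasurable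
  · filter_upwards [ae_restrict_mem measurableSet_Ioo] with x hx
    have hx0 : (0:ℝ) < x := hx.1
    have hx1 : (0:ℝ) < 1 - x := by linarith [hx.2]
    have hlog : |Real.log x| ≤ (2 / c) * x ^ (-(c/2)) := by
      rw [abs_of_nonpos (Real.log_nonpos hx0.le hx.2.le)]
      have := neg_log_le hx0 (show (0:ℝ) < c/2 by linarith)
      calc -Real.log x ≤ x ^ (-(c/2)) / (c/2) := this
        _ = (2 / c) * x ^ (-(c/2)) := by field_simp
    have hnn : 0 ≤ x ^ (c - 1) * (1 - x) ^ (b - 1) :=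
      mul_nonneg (Real.rpow_nonneg hx0.le _) (Real.rpow_nonneg hx1.le _)
    rw [Real.norm_eq_abs, abs_of_nonneg (mul_nonneg (abs_nonneg _) hnn)]
    calc |Real.log x| * (x ^ (c - 1) * (1 - x) ^ (b - 1))
        ≤ (2 / c) * x ^ (-(c/2)) * (x ^ (c - 1) * (1 - x) ^ (b - 1)) := by
          exact mul_le_mul_of_nonneg_right hlog hnn
      _ = (2 / c) * (x ^ (-(c/2) + (c - 1)) * (1 - x) ^ (b - 1)) := by
          rw [Real.rpow_add hx0]; ring
      _ = (2 / c) * (x ^ (c / 2 - 1) * (1 - x) ^ (b - 1)) := by ring_nf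

lemma hasDerivAt_betaFun {a b : ℝ} (ha : 0 < a) (hb : 0 < b) :
    HasDerivAt (fun t => ∫ x in Ioo (0:ℝ) 1, x ^ (t - 1) * (1 - x) ^ (b - 1))
      (∫ x in Ioo (0:ℝ) 1, Real.log x * (x ^ (a - 1) * (1 - x) ^ (b - 1))) a := by
  have key := hasDerivAt_integral_of_dominated_loc_of_deriv_le
    (F := fun t (x : ℝ) => x ^ (t - 1) * (1 - x) ^ (b - 1))
    (F' := fun t (x : ℝ) => Real.log x * (x ^ (t - 1) * (1 - x) ^ (b - 1)))
    (μ := volume.restrict (Ioo (0:ℝ) 1)) (x₀ := a)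
    (bound := fun x => |Real.log x| * (x ^ (a/2 - 1) * (1 - x) ^ (b - 1)))
    (s := Metric.ball a (a/2)) (Metric.ball_mem_nhds a (by linarith))
    ?_ ?_ ?_ ?_ ?_ ?_
  · exact key.2
  · filter_upwards with t
    exact ((measurable_id.pow measurable_const).mul
      ((measurable_const.sub measurable_id).pow measurable_const)).aestronglyMeasurable
  · exact beta_integrableOn ha hb
  · exact (Real.measurable_log.mul ((measurable_id.pow measurable_const).mul
      ((measurable_const.sub measurable_id).pow measurable_const))).aestronglyMeasurable
  · filter_upwards [ae_restrict_mem measurableSet_Ioo] with x hx t ht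
    have hx0 : (0:ℝ) < x := hx.1
    have hx1 : (0:ℝ) < 1 - x := by linarith [hx.2]
    have htl : a/2 - 1 ≤ t - 1 := by
      have h := Metric.mem_ball.mp ht
      rw [Real.dist_eq] at h
      have := abs_lt.mp h
      linarith
    have hpow : x ^ (t - 1) ≤ x ^ (a/2 - 1) :=
      Real.rpow_le_rpow_of_exponent_ge hx0 hx.2.le htl
    rw [Real.norm_eq_abs, abs_mul, abs_mul]
    rw [abs_of_nonneg (Real.rpow_nonneg hx0.le _), abs_of_nonneg (Real.rpow_nonneg hx1.le _)]
    have h2 : x ^ (t-1) * (1-x) ^ (b-1) ≤ x ^ (a/2-1) * (1-x) ^ (b-1) :=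
      mul_le_mul_of_nonneg_right hpow (Real.rpow_nonneg hx1.le _)
    nlinarith [abs_nonneg (Real.log x), Real.rpow_nonneg hx0.le (t-1), Real.rpow_nonneg hx1.le (b-1)]
  · exact log_beta_integrableOn (by linarith) hb
  · filter_upwards [ae_restrict_mem measurableSet_Ioo] with x hx t _
    have hx0 : (0:ℝ) < x := hx.1
    have hd : HasDerivAt (fun t : ℝ => x ^ (t - 1)) (x ^ (t - 1) * Real.log x) t := by
      have h1 := (Real.hasStrictDerivAt_const_rpow hx0 (t - 1)).hasDerivAt
      have h2 : HasDerivAt (fun t : ℝ => t - 1) 1 t := (hasDerivAt_id t).sub_const 1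
      simpa [Function.comp_def] using h1.comp t h2
    have := hd.mul_const ((1 - x) ^ (b - 1))
    convert this using 1
    · rfl
    ring


lemma Gamma_diff {x : ℝ} (hx : 0 < x) : DifferentiableAt ℝ Real.Gamma x :=
  Real.differentiableAt_Gamma fun m => by
    have hm : -(m:ℝ) ≤ 0 := by simp [Nat.cast_nonneg]
    intro h; rw [h] at hx; linarith

lemma digamma_eq {x : ℝ} (hx : 0 < x) :
    digamma x = deriv Real.Gamma x / Real.Gamma x := by
  have h := ((Gamma_diff hx).hasDerivAt).log (Real.Gamma_pos_of_pos hx).ne'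
  exact h.deriv

lemma log_beta_integral_eq {a b : ℝ} (ha : 0 < a) (hb : 0 < b) :
    ∫ x in Ioo (0:ℝ) 1, Real.log x * (x ^ (a - 1) * (1 - x) ^ (b - 1)) =
      (Real.Gamma a * Real.Gamma b / Real.Gamma (a + b)) * (digamma a - digamma (a + b)) := by
  set I := ∫ x in Ioo (0:ℝ) 1, Real.log x * (x ^ (a - 1) * (1 - x) ^ (b - 1))
  have hab : 0 < a + b := by linarith
  have hΓa := (Gamma_diff ha).hasDerivAt
  have hΓab : HasDerivAt (fun t => Real.Gamma (t + b)) (deriv Real.Gamma (a + b)) a := by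
    have := ((Gamma_diff hab).hasDerivAt).comp a ((hasDerivAt_id a).add_const b)
    simpa [Function.comp_def] using this
  have hGab0 : Real.Gamma (a + b) ≠ 0 := (Real.Gamma_pos_of_pos hab).ne'
  have hG : HasDerivAt (fun t => Real.Gamma t * Real.Gamma b / Real.Gamma (t + b))
      ((deriv Real.Gamma a * Real.Gamma b * Real.Gamma (a + b) -
        Real.Gamma a * Real.Gamma b * deriv Real.Gamma (a + b)) / Real.Gamma (a + b) ^ 2) a :=
    (hΓa.mul_const (Real.Gamma b)).div hΓab hGab0
  have hF : HasDerivAt (fun t => ∫ x in Ioo (0:ℝ) 1, x ^ (t - 1) * (1 - x) ^ (b - 1)) I a :=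
    hasDerivAt_betaFun ha hb
  have heq : (fun t => Real.Gamma t * Real.Gamma b / Real.Gamma (t + b)) =ᶠ[nhds a]
      (fun t => ∫ x in Ioo (0:ℝ) 1, x ^ (t - 1) * (1 - x) ^ (b - 1)) := by
    filter_upwards [eventually_gt_nhds ha] with t ht
    exact (real_beta_eq ht hb).symm
  have hG' : HasDerivAt (fun t => ∫ x in Ioo (0:ℝ) 1, x ^ (t - 1) * (1 - x) ^ (b - 1))
      ((deriv Real.Gamma a * Real.Gamma b * Real.Gamma (a + b) -
        Real.Gamma a * Real.Gamma b * deriv Real.Gamma (a + b)) / Real.Gamma (a + b) ^ 2) a :=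
    hG.congr_of_eventuallyEq heq.symm
  have hI : I = (deriv Real.Gamma a * Real.Gamma b * Real.Gamma (a + b) -
        Real.Gamma a * Real.Gamma b * deriv Real.Gamma (a + b)) / Real.Gamma (a + b) ^ 2 :=
    hF.unique hG'
  rw [hI, digamma_eq ha, digamma_eq hab]
  have hGa0 : Real.Gamma a ≠ 0 := (Real.Gamma_pos_of_pos ha).ne'
  field_simp

open MeasureTheory ENNReal

lemma lintegral_neglog_beta {a b : ℝ} (ha : 0 < a) (hb : 0 < b) :
    ∫⁻ x, ENNReal.ofReal (-(Real.log x)) ∂(betaMeasure a b)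
      = ENNReal.ofReal (digamma (a + b) - digamma a) ∧
    0 ≤ digamma (a + b) - digamma a := by
  set C := Real.Gamma a * Real.Gamma b / Real.Gamma (a + b) with hC
  have hC0 : 0 < C := by
    apply div_pos (mul_pos (Real.Gamma_pos_of_pos ha) (Real.Gamma_pos_of_pos hb))
      (Real.Gamma_pos_of_pos (by linarith))
  set f : ℝ → ℝ := fun x => -Real.log x * (x ^ (a - 1) * (1 - x) ^ (b - 1) / C) with hf
  have hmeas_dens : Measurable fun x : ℝ =>
      ENNReal.ofReal (x ^ (a - 1) * (1 - x) ^ (b - 1) / C) :=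
    (((measurable_id.pow measurable_const).mul
      ((measurable_const.sub measurable_id).pow measurable_const)).div_const C).ennreal_ofReal
  have hfint : IntegrableOn f (Set.Ioo (0:ℝ) 1) := by
    have h1 : IntegrableOn (fun x : ℝ => (1/C) * (|Real.log x| * (x ^ (a-1) * (1-x) ^ (b-1))))
        (Set.Ioo 0 1) := (log_beta_integrableOn ha hb).const_mul _
    refine Integrable.mono' h1 ?_ ?_
    · exact ((Real.measurable_log.neg).mul (((measurable_id.pow measurable_const).mul
        ((measurable_const.sub measurable_id).pow measurable_const)).div_const C)).aestronglyMeasurable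
    · filter_upwards [ae_restrict_mem measurableSet_Ioo] with x hx
      have hx0 : (0:ℝ) < x := hx.1
      have hx1 : (0:ℝ) < 1 - x := by linarith [hx.2]
      have hnn : 0 ≤ x ^ (a - 1) * (1 - x) ^ (b - 1) :=
        mul_nonneg (Real.rpow_nonneg hx0.le _) (Real.rpow_nonneg hx1.le _)
      rw [Real.norm_eq_abs, hf, abs_mul, abs_neg, abs_div, abs_of_nonneg hnn,
        abs_of_nonneg hC0.le]
      rw [div_eq_mul_inv, ← mul_assoc]
      rw [show (1/C) * (|Real.log x| * (x ^ (a-1) * (1-x) ^ (b-1)))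
          = |Real.log x| * (x ^ (a-1) * (1-x) ^ (b-1)) * C⁻¹ by ring]
  have hfnn : ∀ x ∈ Set.Ioo (0:ℝ) 1, 0 ≤ f x := by
    intro x hx
    have hx0 : (0:ℝ) < x := hx.1
    have hx1 : (0:ℝ) < 1 - x := by linarith [hx.2]
    apply mul_nonneg
    · simp only [neg_nonneg]
      exact Real.log_nonpos hx0.le hx.2.le
    · positivity
  have hIval : ∫ x in Set.Ioo (0:ℝ) 1, f x = digamma (a + b) - digamma a := by
    have : ∫ x in Set.Ioo (0:ℝ) 1, f x
        = -(1/C) * ∫ x in Set.Ioo (0:ℝ) 1, Real.log x * (x ^ (a-1) * (1-x) ^ (b-1)) := by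
      rw [← integral_const_mul]
      refine setIntegral_congr_fun measurableSet_Ioo fun x _ => ?_
      rw [hf]; ring
    rw [this, log_beta_integral_eq ha hb, hC]
    have h1 : Real.Gamma (a+b) ≠ 0 := (Real.Gamma_pos_of_pos (by linarith)).ne'
    have h2 : Real.Gamma a ≠ 0 := (Real.Gamma_pos_of_pos ha).ne'
    have h3 : Real.Gamma b ≠ 0 := (Real.Gamma_pos_of_pos hb).ne'
    field_simp
    ring
  have hrnn : 0 ≤ digamma (a + b) - digamma a := by
    rw [← hIval]
    exact setIntegral_nonneg measurableSet_Ioo hfnn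
  refine ⟨?_, hrnn⟩
  rw [betaMeasure, lintegral_withDensity_eq_lintegral_mul _ hmeas_dens
    (g := fun x : ℝ => ENNReal.ofReal (-Real.log x)) (Real.measurable_log.neg.ennreal_ofReal)]
  have : ∫⁻ x in Set.Ioo (0:ℝ) 1,
      (ENNReal.ofReal (x ^ (a - 1) * (1 - x) ^ (b - 1) / C) * ENNReal.ofReal (-Real.log x))
      = ∫⁻ x in Set.Ioo (0:ℝ) 1, ENNReal.ofReal (f x) := by
    refine setLIntegral_congr_fun measurableSet_Ioo ?_
    intro x hx
    have hx0 : (0:ℝ) < x := hx.1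
    have hx1 : (0:ℝ) < 1 - x := by linarith [hx.2]
    have hnn : 0 ≤ x ^ (a - 1) * (1 - x) ^ (b - 1) / C := by positivity
    beta_reduce
    rw [← ENNReal.ofReal_mul hnn, hf]
    ring_nf
  simp only [Pi.mul_apply]
  rw [this, ← ofReal_integral_eq_lintegral_ofReal hfint
    ((ae_restrict_mem measurableSet_Ioo).mono fun x hx => hfnn x hx), hIval]

/-- **Mean entropy under a Pitman–Yor-type prior.** Let `w` be a random probability sequence
and `T` a size-biased index for `w`. If `w_T ∼ Beta(1−d, α+d)` with `0 ≤ d < 1`, `α > −d`,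
then `E[−∑ᵢ wᵢ log wᵢ] = ψ₀(α+1) − ψ₀(1−d)`. -/
theorem expected_entropy_of_sizeBiased_beta {Ω : Type*} [MeasurableSpace Ω]
    (μ : Measure Ω) [IsProbabilityMeasure μ]
    (w : Ω → ℕ → ℝ) (T : Ω → ℕ)
    (hw : Measurable w) (hT : Measurable T)
    (hnn : ∀ᵐ ω ∂μ, ∀ i, 0 ≤ w ω i)
    (hsum : ∀ᵐ ω ∂μ, ∑' i, w ω i = 1)
    (hsb : ∀ i : ℕ, ∀ g : (ℕ → ℝ) → ℝ≥0∞, Measurable g →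
      ∫⁻ ω in {ω | T ω = i}, g (w ω) ∂μ = ∫⁻ ω, ENNReal.ofReal (w ω i) * g (w ω) ∂μ)
    (d α : ℝ) (hd0 : 0 ≤ d) (hd1 : d < 1) (hα : -d < α)
    (hlaw : Measure.map (fun ω => w ω (T ω)) μ = betaMeasure (1 - d) (α + d)) :
    ∫ ω, (-(∑' i, w ω i * Real.log (w ω i))) ∂μ = digamma (α + 1) - digamma (1 - d) := by
  classical
  set a := 1 - d with ha_def
  set b := α + d with hb_def
  have ha : 0 < a := by rw [ha_def]; linarith
  have hb : 0 < b := by rw [hb_def]; linarith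
  have hab : a + b = α + 1 := by rw [ha_def, hb_def]; ring
  have hwT : Measurable fun ω => w ω (T ω) := by
    have hmeval : Measurable fun p : (ℕ → ℝ) × ℕ => p.1 p.2 :=
      measurable_from_prod_countable_left fun n => measurable_pi_apply n
    exact hmeval.comp (hw.prodMk hT)
  set E := ∫⁻ ω, ENNReal.ofReal (-(Real.log (w ω (T ω)))) ∂μ with hE_def
  have hbeta := lintegral_neglog_beta ha hb
  set r := digamma (a + b) - digamma a with hr_def
  have hE : E = ENNReal.ofReal r := by
    rw [hE_def, ← lintegral_map (f := fun x : ℝ => ENNReal.ofReal (-Real.log x)) (Real.measurable_log.neg.ennreal_ofReal) hwT, hlaw]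
    exact hbeta.1
  set g : Ω → ℝ≥0∞ := fun ω => ∑' i, ENNReal.ofReal (w ω i * (-(Real.log (w ω i)))) with hg_def
  have hsummeas : ∀ i : ℕ, Measurable fun ω =>
      ENNReal.ofReal (w ω i * (-(Real.log (w ω i)))) := fun i =>
    (((measurable_pi_apply i).comp hw).mul
      (((measurable_pi_apply i).comp hw).log.neg)).ennreal_ofReal
  have hgmeas : Measurable g := Measurable.ennreal_tsum hsummeas
  have hglint : ∫⁻ ω, g ω ∂μ = E := by
    have step1 : ∀ i : ℕ, ∫⁻ ω, ENNReal.ofReal (w ω i * (-(Real.log (w ω i)))) ∂μ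
        = ∫⁻ ω in {ω | T ω = i}, ENNReal.ofReal (-(Real.log (w ω (T ω)))) ∂μ := by
      intro i
      have hgi : Measurable fun v : ℕ → ℝ => ENNReal.ofReal (-(Real.log (v i))) :=
        ((measurable_pi_apply i).log.neg).ennreal_ofReal
      have e1 : ∫⁻ ω, ENNReal.ofReal (w ω i * (-(Real.log (w ω i)))) ∂μ
          = ∫⁻ ω, ENNReal.ofReal (w ω i) *
              (fun v : ℕ → ℝ => ENNReal.ofReal (-(Real.log (v i)))) (w ω) ∂μ := by
        refine lintegral_congr_ae ?_
        filter_upwards [hnn] with ω hω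
        rw [ENNReal.ofReal_mul (hω i)]
      rw [e1, ← hsb i _ hgi]
      refine setLIntegral_congr_fun (hT (measurableSet_singleton i)) ?_
      intro ω hω
      have hTi : T ω = i := hω
      beta_reduce
      rw [hTi]
    have hunion : (⋃ i : ℕ, {ω | T ω = i}) = Set.univ := by
      ext ω; simp
    have hdisj : Pairwise (Function.onFun Disjoint fun i : ℕ => {ω | T ω = i}) := by
      intro i j hij
      rw [Function.onFun, Set.disjoint_left]
      intro ω h1 h2
      have h1' : T ω = i := h1
      have h2' : T ω = j := h2
      exact hij (h1'.symm.trans h2')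
    calc ∫⁻ ω, g ω ∂μ
        = ∑' i : ℕ, ∫⁻ ω, ENNReal.ofReal (w ω i * (-(Real.log (w ω i)))) ∂μ :=
          lintegral_tsum fun i => (hsummeas i).aemeasurable
      _ = ∑' i : ℕ, ∫⁻ ω in {ω | T ω = i}, ENNReal.ofReal (-(Real.log (w ω (T ω)))) ∂μ := by
          exact tsum_congr step1
      _ = ∫⁻ ω in ⋃ i : ℕ, {ω | T ω = i}, ENNReal.ofReal (-(Real.log (w ω (T ω)))) ∂μ :=
          (lintegral_iUnion (fun i => hT (measurableSet_singleton i)) hdisj _).symm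
      _ = E := by rw [hunion, Measure.restrict_univ]
  have hEne : (∫⁻ ω, g ω ∂μ) ≠ ⊤ := by
    rw [hglint, hE]; exact ENNReal.ofReal_ne_top
  have hglt : ∀ᵐ ω ∂μ, g ω < ⊤ := ae_lt_top hgmeas hEne
  have hkey : ∀ᵐ ω ∂μ, -(∑' i, w ω i * Real.log (w ω i)) = (g ω).toReal := by
    filter_upwards [hnn, hsum, hglt] with ω h0 h1 h2
    have hws : Summable (w ω) := by
      by_contra hns
      rw [tsum_eq_zero_of_not_summable hns] at h1
      norm_num at h1
    have hle1 : ∀ i, w ω i ≤ 1 := fun i =>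
      h1 ▸ hws.le_tsum i fun j _ => h0 j
    set f := fun i => w ω i * (-(Real.log (w ω i))) with hfdef
    have hfnn : ∀ i, 0 ≤ f i := fun i =>
      mul_nonneg (h0 i) (neg_nonneg.mpr (Real.log_nonpos (h0 i) (hle1 i)))
    have h2' : (∑' i, ENNReal.ofReal (f i)) ≠ ⊤ := h2.ne
    have hsf : Summable f := by
      have hs := ENNReal.summable_toReal h2'
      refine hs.congr fun i => ?_
      rw [ENNReal.toReal_ofReal (hfnn i)]
    have hgω : g ω = ENNReal.ofReal (∑' i, f i) :=
      (ENNReal.ofReal_tsum_of_nonneg hfnn hsf).symm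
    rw [hgω, ENNReal.toReal_ofReal (tsum_nonneg hfnn)]
    have hfe : f = fun i => -(w ω i * Real.log (w ω i)) := by
      funext i; rw [hfdef]; ring
    rw [hfe, tsum_neg]
  calc ∫ ω, (-(∑' i, w ω i * Real.log (w ω i))) ∂μ
      = ∫ ω, (g ω).toReal ∂μ := integral_congr_ae hkey
    _ = (∫⁻ ω, g ω ∂μ).toReal := integral_toReal hgmeas.aemeasurable hglt
    _ = r := by rw [hglint, hE, ENNReal.toReal_ofReal hbeta.2]
    _ = digamma (α + 1) - digamma (1 - d) := by rw [hr_def, hab]
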